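/- Let M, Q, J, R be real n×n matrices and G a real n×m matrix, where M is symmetric positive definite, Q is symmetric, M and Q commute, J is skew-symmetric, and R is symmetric positive semidefinite. Let U : ℝ → ℝᵐ be continuous and X : ℝ → ℝⁿ differentiable with M X'(t) = (J - R) Q X(t) + G U(t). Then for all t₀ ≤ t₁, the discrete Hamiltonian Ĥ(t) = ½ X(t)ᵀ Q M X(t) satisfies the passivity inequality Ĥ(t₁) - Ĥ(t₀) = ∫_{t₀}^{t₁} (Y(t)ᵀU(t) - (QX(t))ᵀR(QX(t))) dt ≤ ∫_{t₀}^{t₁} Y(t)ᵀ U(t) dt, where Y(t) = Gᵀ Q X(t). -/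

import Mathlib

open Matrix intervalIntegral

lemma hasDerivAt_quad {n : ℕ} (A : Matrix (Fin n) (Fin n) ℝ)
    (X : ℝ → Fin n → ℝ) (hX : Differentiable ℝ X) (t : ℝ) :
    HasDerivAt (fun s => X s ⬝ᵥ A.mulVec (X s))
      (deriv X t ⬝ᵥ A.mulVec (X t) + X t ⬝ᵥ A.mulVec (deriv X t)) t := by
  have hXi : ∀ i, HasDerivAt (fun s => X s i) (deriv X t i) t := by
    intro i
    exact (hasDerivAt_pi.1 ((hX t).hasDerivAt))  i
  have : HasDerivAt (fun s => ∑ i, ∑ j, X s i * (A i j * X s j))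
      (∑ i, ∑ j, (deriv X t i * (A i j * X t j) + X t i * (A i j * deriv X t j))) t := by
    apply HasDerivAt.fun_sum
    intro i _
    apply HasDerivAt.fun_sum
    intro j _
    exact (hXi i).mul ((hXi j).const_mul (A i j))
  convert this using 1
  · ext s
    simp [dotProduct, mulVec, Finset.mul_sum]
  · simp [dotProduct, mulVec, Finset.mul_sum, Finset.sum_add_distrib]

theorem discrete_pH_passivity
    {n m : ℕ} (M Q J R : Matrix (Fin n) (Fin n) ℝ) (G : Matrix (Fin n) (Fin m) ℝ)
    (hM : M.PosDef) (hQ : Q.IsSymm) (hMQ : M * Q = Q * M)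
    (hJ : Jᵀ = -J) (hR : R.PosSemidef)
    (U : ℝ → Fin m → ℝ) (hU : Continuous U)
    (X : ℝ → Fin n → ℝ) (hX : Differentiable ℝ X)
    (hode : ∀ t, M.mulVec (deriv X t)
      = (J - R).mulVec (Q.mulVec (X t)) + G.mulVec (U t)) :
    ∀ t₀ t₁ : ℝ, t₀ ≤ t₁ →
      ((1/2) * (X t₁ ⬝ᵥ (Q * M).mulVec (X t₁))
          - (1/2) * (X t₀ ⬝ᵥ (Q * M).mulVec (X t₀))
        = ∫ t in t₀..t₁, (Gᵀ.mulVec (Q.mulVec (X t)) ⬝ᵥ U t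
            - Q.mulVec (X t) ⬝ᵥ R.mulVec (Q.mulVec (X t))))
      ∧ ((1/2) * (X t₁ ⬝ᵥ (Q * M).mulVec (X t₁))
          - (1/2) * (X t₀ ⬝ᵥ (Q * M).mulVec (X t₀))
        ≤ ∫ t in t₀..t₁, Gᵀ.mulVec (Q.mulVec (X t)) ⬝ᵥ U t) := by
  intro t₀ t₁ ht
  have hMs : Mᵀ = M := by have h := hM.1; simp at h; exact h
  have hQM : (Q * M)ᵀ = Q * M := by
    rw [transpose_mul, hQ, hMs, hMQ]
  have hXc : Continuous X := hX.continuous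
  -- continuity of the two scalar functions
  have hcont1 : Continuous fun t => Gᵀ.mulVec (Q.mulVec (X t)) ⬝ᵥ U t := by
    simp only [dotProduct, mulVec]
    fun_prop
  have hcont2 : Continuous fun t => Q.mulVec (X t) ⬝ᵥ R.mulVec (Q.mulVec (X t)) := by
    simp only [dotProduct, mulVec]
    fun_prop
  -- derivative of the Hamiltonian
  have hH : ∀ t, HasDerivAt (fun s => (1/2) * (X s ⬝ᵥ (Q * M).mulVec (X s)))
      (Gᵀ.mulVec (Q.mulVec (X t)) ⬝ᵥ U t
        - Q.mulVec (X t) ⬝ᵥ R.mulVec (Q.mulVec (X t))) t := by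
    intro t
    have h := (hasDerivAt_quad (Q * M) X hX t).const_mul ((1:ℝ)/2)
    refine h.congr_deriv ?_
    have hsym : X t ⬝ᵥ (Q * M).mulVec (deriv X t)
        = deriv X t ⬝ᵥ (Q * M).mulVec (X t) := by
      rw [dotProduct_mulVec, ← mulVec_transpose, hQM, dotProduct_comm]
    have key : deriv X t ⬝ᵥ (Q * M).mulVec (X t)
        = Gᵀ.mulVec (Q.mulVec (X t)) ⬝ᵥ U t
          - Q.mulVec (X t) ⬝ᵥ R.mulVec (Q.mulVec (X t)) := by
      have h1 : deriv X t ⬝ᵥ (Q * M).mulVec (X t)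
          = M.mulVec (deriv X t) ⬝ᵥ Q.mulVec (X t) := by
        rw [← hMQ, ← mulVec_mulVec, dotProduct_mulVec, ← mulVec_transpose, hMs,
          dotProduct_comm]
      rw [h1, hode t, add_dotProduct, sub_mulVec, sub_dotProduct]
      have hJ0 : J.mulVec (Q.mulVec (X t)) ⬝ᵥ Q.mulVec (X t) = 0 := by
        have := dotProduct_mulVec (Q.mulVec (X t)) J (Q.mulVec (X t))
        have h2 : Q.mulVec (X t) ⬝ᵥ J.mulVec (Q.mulVec (X t))
            = - (Q.mulVec (X t) ⬝ᵥ J.mulVec (Q.mulVec (X t))) := by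
          conv_lhs => rw [dotProduct_mulVec, ← mulVec_transpose, hJ, neg_mulVec,
            dotProduct_comm, dotProduct_neg]
        have h3 : Q.mulVec (X t) ⬝ᵥ J.mulVec (Q.mulVec (X t)) = 0 := by linarith
        rw [dotProduct_comm, h3]
      have hRs : R.mulVec (Q.mulVec (X t)) ⬝ᵥ Q.mulVec (X t)
          = Q.mulVec (X t) ⬝ᵥ R.mulVec (Q.mulVec (X t)) := dotProduct_comm _ _
      have hG : G.mulVec (U t) ⬝ᵥ Q.mulVec (X t)
          = Gᵀ.mulVec (Q.mulVec (X t)) ⬝ᵥ U t := by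
        rw [dotProduct_comm, dotProduct_mulVec, ← mulVec_transpose]
      rw [hJ0, hRs, hG]
      ring
    rw [hsym, key]
    ring
  have heq : (1/2) * (X t₁ ⬝ᵥ (Q * M).mulVec (X t₁))
      - (1/2) * (X t₀ ⬝ᵥ (Q * M).mulVec (X t₀))
      = ∫ t in t₀..t₁, (Gᵀ.mulVec (Q.mulVec (X t)) ⬝ᵥ U t
          - Q.mulVec (X t) ⬝ᵥ R.mulVec (Q.mulVec (X t))) := by
    exact (integral_eq_sub_of_hasDerivAt (fun t _ => hH t)
      ((hcont1.sub hcont2).intervalIntegrable _ _)).symm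
  refine ⟨heq, ?_⟩
  rw [heq]
  apply intervalIntegral.integral_mono_on ht
    ((hcont1.sub hcont2).intervalIntegrable _ _) (hcont1.intervalIntegrable _ _)
  intro t _
  have : 0 ≤ Q.mulVec (X t) ⬝ᵥ R.mulVec (Q.mulVec (X t)) := by
    have := hR.dotProduct_mulVec_nonneg (Q.mulVec (X t))
    simpa using this
  simp only [Pi.sub_apply]
  linarith
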